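/- arXiv:2206.08571 — 2 statements merged into one kernel-verified Lean document; each statement's English description precedes it below -/
import Mathlib

section
/- For every s ≥ 0, the following two integral bounds hold: ∫_s^∞ ∫_s^∞ Ai(x+y)² dx dy ≤ (1/4)·e^{-4s}, and ∫_s^∞ ∫_s^∞ e^{y}·Ai(x+y)² dx dy ≤ (1/2)·e^{-3s}. In particular, the Hilbert–Schmidt norm of the kernel K(x,y) = 1_{x>s}1_{y>s}Ai(x+y) is at most (1/2)e^{-2s}, and that of the weighted kernel K̄(x,y) = 1_{x>s}1_{y>s}Ai(x+y)e^{y/2} is at most e^{-s}. -/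
open MeasureTheory Real Filter

/-- The Airy function, defined for `x ∈ ℝ` by the convergent improper integral
`Ai(x) = (1/π) lim_{T→∞} ∫₀ᵀ cos(t³/3 + x t) dt`. -/
noncomputable def Ai (x : ℝ) : ℝ :=
  limUnder Filter.atTop
    (fun T : ℝ => (1 / Real.pi) * ∫ t in (0 : ℝ)..T, Real.cos (t ^ 3 / 3 + x * t))

/-- The Hilbert–Schmidt norm `(∫∫ K(x,y)² dx dy)^{1/2}` of a kernel on `ℝ²`. -/
noncomputable def HSnorm (K : ℝ → ℝ → ℝ) : ℝ :=
  Real.sqrt (∫⁻ p : ℝ × ℝ, ENNReal.ofReal (K p.1 p.2 ^ 2)).toReal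

section AiryAux

open Complex intervalIntegral


noncomputable def fC (x : ℝ) : ℂ → ℂ := fun z => Complex.exp (Complex.I * (z^3/3 + x*z))

lemma norm_fC (x u v : ℝ) :
    ‖fC x ((u:ℂ) + (v:ℂ)*Complex.I)‖ = Real.exp (-(v*u^2) + v^3/3 - x*v) := by
  rw [fC, Complex.norm_exp]
  congr 1
  simp [Complex.add_re, Complex.mul_re, Complex.mul_im, Complex.add_im, Complex.div_re, pow_succ]
  ring

lemma cont_fC (x : ℝ) : Continuous (fC x) := by
  unfold fC; fun_prop

lemma side_bound (x w : ℝ) (hw : w ≠ 0) :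
    ‖∫ y in (0:ℝ)..1, fC x ((w:ℂ) + (y:ℂ)*Complex.I)‖ ≤ Real.exp (1/3 + |x|) / w^2 := by
  have hw2 : (0:ℝ) < w^2 := by positivity
  have key : ∀ᵐ (y : ℝ) ∂(volume.restrict (Set.uIoc (0:ℝ) 1)),
      ‖fC x ((w:ℂ) + (y:ℂ)*Complex.I)‖ ≤ Real.exp (1/3 + |x|) * Real.exp (-(w^2*y)) := by
    refine (ae_restrict_mem measurableSet_uIoc).mono fun y hy => ?_
    rw [Set.uIoc_of_le zero_le_one] at hy
    rw [norm_fC, ← Real.exp_add]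
    apply Real.exp_le_exp.2
    have h1 : y^3 ≤ 1 := pow_le_one₀ hy.1.le hy.2
    have h2 : -(x*y) ≤ |x| := by
      calc -(x*y) ≤ |x*y| := neg_le_abs _
        _ = |x| * |y| := abs_mul _ _
        _ ≤ |x| * 1 := by
            apply mul_le_mul_of_nonneg_left _ (abs_nonneg x)
            rw [abs_of_pos hy.1]; exact hy.2
        _ = |x| := mul_one _
    nlinarith
  have hg : IntervalIntegrable (fun y : ℝ => Real.exp (1/3 + |x|) * Real.exp (-(w^2*y)))
      volume 0 1 := (by fun_prop : Continuous fun y : ℝ => Real.exp (1/3 + |x|) * Real.exp (-(w^2*y))).intervalIntegrable _ _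
  refine (intervalIntegral.norm_integral_le_abs_of_norm_le key hg).trans ?_
  rw [intervalIntegral.integral_const_mul]
  have hc : -(w^2) ≠ 0 := neg_ne_zero.2 (ne_of_gt hw2)
  have hI : (∫ y in (0:ℝ)..1, Real.exp (-(w^2*y))) = (1 - Real.exp (-(w^2)))/w^2 := by
    have : (∫ y in (0:ℝ)..1, Real.exp (-(w^2)*y)) = (-(w^2))⁻¹ • ∫ y in (-(w^2)*0)..(-(w^2)*1), Real.exp y := by
      rw [integral_comp_mul_left (fun y => Real.exp y) hc]
    simp only [mul_zero, mul_one, integral_exp, smul_eq_mul, Real.exp_zero] at this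
    rw [show (fun y : ℝ => Real.exp (-(w^2*y))) = fun y : ℝ => Real.exp (-(w^2)*y) by funext y; ring_nf]
    rw [this]
    field_simp
    ring
  rw [hI]
  have he : Real.exp (-(w^2)) ≤ 1 := Real.exp_le_one_iff.2 (by linarith)
  have h0 : (0:ℝ) ≤ 1 - Real.exp (-(w^2)) := by linarith
  rw [_root_.abs_of_nonneg (mul_nonneg (Real.exp_nonneg _) (div_nonneg h0 hw2.le))]
  calc Real.exp (1/3 + |x|) * ((1 - Real.exp (-(w^2)))/w^2)
      ≤ Real.exp (1/3 + |x|) * (1/w^2) := by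
        apply mul_le_mul_of_nonneg_left _ (Real.exp_nonneg _)
        gcongr
        linarith [Real.exp_pos (-(w^2))]
    _ = Real.exp (1/3 + |x|) / w^2 := by ring

lemma integrable_fC (x : ℝ) : Integrable (fun u : ℝ => fC x ((u:ℂ) + Complex.I)) := by
  apply Integrable.mono' ((integrable_exp_neg_mul_sq one_pos).const_mul (Real.exp (1/3 - x)))
  · exact ((cont_fC x).comp (by continuity)).aestronglyMeasurable
  · filter_upwards with u
    have := norm_fC x u 1
    simp only [Complex.ofReal_one, one_mul] at this
    rw [this, ← Real.exp_add]
    exact le_of_eq (by congr 1; ring)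

lemma rect (x T : ℝ) :
    (∫ u in (-T)..T, fC x ((u:ℂ))) = (∫ u in (-T)..T, fC x ((u:ℂ) + Complex.I))
      - Complex.I • (∫ y in (0:ℝ)..1, fC x (((T:ℝ):ℂ) + (y:ℂ)*Complex.I))
      + Complex.I • (∫ y in (0:ℝ)..1, fC x (((-T:ℝ):ℂ) + (y:ℂ)*Complex.I)) := by
  have h := Complex.integral_boundary_rect_eq_zero_of_differentiableOn (fC x)
    (((-T:ℝ):ℂ)) (((T:ℝ):ℂ) + Complex.I)
    (Differentiable.differentiableOn (by unfold fC; fun_prop))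
  simp only [Complex.add_re, Complex.ofReal_re, Complex.I_re, add_zero, Complex.add_im,
    Complex.ofReal_im, Complex.I_im, zero_add, Complex.ofReal_zero, zero_mul,
    Complex.ofReal_one, one_mul] at h
  linear_combination h

lemma tendsto_A (x : ℝ) :
    Filter.Tendsto (fun T : ℝ => ∫ u in (-T)..T, fC x ((u:ℂ))) Filter.atTop
      (nhds (∫ u : ℝ, fC x ((u:ℂ) + Complex.I))) := by
  have hB : Filter.Tendsto (fun T : ℝ => ∫ u in (-T)..T, fC x ((u:ℂ) + Complex.I))
      Filter.atTop (nhds (∫ u : ℝ, fC x ((u:ℂ) + Complex.I))) :=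
    intervalIntegral_tendsto_integral (integrable_fC x) tendsto_neg_atTop_atBot tendsto_id
  have hsq : Filter.Tendsto (fun T : ℝ => Real.exp (1/3 + |x|) / T^2) Filter.atTop (nhds 0) :=
    Filter.Tendsto.div_atTop tendsto_const_nhds (tendsto_pow_atTop two_ne_zero)
  have hSp : Filter.Tendsto
      (fun T : ℝ => Complex.I • ∫ y in (0:ℝ)..1, fC x (((T:ℝ):ℂ) + (y:ℂ)*Complex.I))
      Filter.atTop (nhds 0) := by
    apply squeeze_zero_norm' _ hsq
    filter_upwards [Filter.eventually_ge_atTop (1:ℝ)] with T hT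
    rw [norm_smul, Complex.norm_I, one_mul]
    exact side_bound x T (by linarith)
  have hSm : Filter.Tendsto
      (fun T : ℝ => Complex.I • ∫ y in (0:ℝ)..1, fC x (((-T:ℝ):ℂ) + (y:ℂ)*Complex.I))
      Filter.atTop (nhds 0) := by
    apply squeeze_zero_norm' _ hsq
    filter_upwards [Filter.eventually_ge_atTop (1:ℝ)] with T hT
    rw [norm_smul, Complex.norm_I, one_mul]
    have := side_bound x (-T) (by intro h; simp at h; linarith)
    rw [show ((-T)^2 : ℝ) = T^2 by ring] at this
    exact this
  have := (hB.sub hSp).add hSm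
  simp only [sub_zero, add_zero] at this
  exact this.congr (fun T => (rect x T).symm)

lemma fC_re (x u : ℝ) : (fC x ((u:ℂ))).re = Real.cos (u^3/3 + x*u) := by
  have h : Complex.I * (((u:ℂ))^3/3 + (x:ℂ)*(u:ℂ)) = ((u^3/3 + x*u : ℝ):ℂ) * Complex.I := by
    push_cast; ring
  simp only [fC]
  rw [h, Complex.exp_ofReal_mul_I_re]

lemma intervalIntegrable_fC (x a b : ℝ) :
    IntervalIntegrable (fun u : ℝ => fC x ((u:ℂ))) MeasureTheory.volume a b :=
  ((cont_fC x).comp Complex.continuous_ofReal).intervalIntegrable a b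

lemma re_interval (x T : ℝ) : (∫ u in (-T)..T, fC x ((u:ℂ))).re
    = 2 * ∫ t in (0:ℝ)..T, Real.cos (t^3/3 + x*t) := by
  have h1 : (∫ u in (-T)..T, fC x ((u:ℂ))).re = ∫ u in (-T)..T, (fC x ((u:ℂ))).re := by
    exact (Complex.reCLM.intervalIntegral_comp_comm (intervalIntegrable_fC x (-T) T)).symm
  rw [h1]
  have h2 : ∀ u : ℝ, (fC x ((u:ℂ))).re = Real.cos (u^3/3 + x*u) := fC_re x
  simp only [h2]
  have hcont : ∀ a b : ℝ, IntervalIntegrable (fun u : ℝ => Real.cos (u^3/3 + x*u))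
      MeasureTheory.volume a b := fun a b => (by fun_prop :
        Continuous fun u : ℝ => Real.cos (u^3/3 + x*u)).intervalIntegrable a b
  have hsplit : (∫ u in (-T)..T, Real.cos (u^3/3 + x*u))
      = (∫ u in (-T)..(0:ℝ), Real.cos (u^3/3 + x*u)) + ∫ u in (0:ℝ)..T, Real.cos (u^3/3 + x*u) :=
    (intervalIntegral.integral_add_adjacent_intervals (hcont _ _) (hcont _ _)).symm
  have heven : (∫ u in (-T)..(0:ℝ), Real.cos (u^3/3 + x*u))
      = ∫ u in (0:ℝ)..T, Real.cos (u^3/3 + x*u) := by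
    have := intervalIntegral.integral_comp_neg (a := (0:ℝ)) (b := T)
      (fun u : ℝ => Real.cos (u^3/3 + x*u))
    rw [neg_zero] at this
    rw [← this]
    apply intervalIntegral.integral_congr
    intro u _
    dsimp only
    rw [show ((-u)^3/3 + x*(-u) : ℝ) = -(u^3/3 + x*u) by ring, Real.cos_neg]
  rw [hsplit, heven]; ring

lemma tendsto_cos (x : ℝ) :
    Filter.Tendsto (fun T : ℝ => (1/Real.pi) * ∫ t in (0:ℝ)..T, Real.cos (t^3/3 + x*t))
      Filter.atTop
      (nhds ((1/(2*Real.pi)) * (∫ u : ℝ, fC x ((u:ℂ) + Complex.I)).re)) := by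
  have h1 : Filter.Tendsto (fun T : ℝ => (∫ u in (-T)..T, fC x ((u:ℂ))).re) Filter.atTop
      (nhds ((∫ u : ℝ, fC x ((u:ℂ) + Complex.I)).re)) :=
    (Complex.continuous_re.tendsto _).comp (tendsto_A x)
  have h2 := h1.const_mul (1/(2*Real.pi))
  apply h2.congr
  intro T
  rw [re_interval]
  have hpi : Real.pi ≠ 0 := Real.pi_ne_zero
  field_simp

lemma Ai_eq (x : ℝ) :
    Ai x = (1/(2*Real.pi)) * (∫ u : ℝ, fC x ((u:ℂ) + Complex.I)).re := by
  unfold Ai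
  exact (tendsto_cos x).limUnder_eq

lemma abs_Ai_le (x : ℝ) : |Ai x| ≤ Real.exp (-x) := by
  rw [Ai_eq]
  have hJ : ‖∫ u : ℝ, fC x ((u:ℂ) + Complex.I)‖ ≤ Real.exp (1/3 - x) * Real.sqrt Real.pi := by
    refine (MeasureTheory.norm_integral_le_integral_norm _).trans ?_
    have hnorm : ∀ u : ℝ, ‖fC x ((u:ℂ) + Complex.I)‖
        = Real.exp (1/3 - x) * Real.exp (-(1:ℝ)*u^2) := by
      intro u
      have := norm_fC x u 1
      simp only [Complex.ofReal_one, one_mul] at this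
      rw [this, ← Real.exp_add]
      congr 1; ring
    rw [MeasureTheory.integral_congr_ae (Filter.Eventually.of_forall hnorm),
      MeasureTheory.integral_const_mul, integral_gaussian]
    rw [div_one]
  set r := (∫ u : ℝ, fC x ((u:ℂ) + Complex.I)).re with hr
  have hre : |r| ≤ Real.exp (1/3 - x) * Real.sqrt Real.pi :=
    (Complex.abs_re_le_norm _).trans hJ
  have hpi : (0:ℝ) < Real.pi := Real.pi_pos
  have h2pi : (0:ℝ) < 2*Real.pi := by positivity
  rw [abs_mul, abs_of_pos (by positivity : (0:ℝ) < 1/(2*Real.pi))]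
  have e13 : Real.exp (1/3 : ℝ) ≤ 2 := by
    have h1 : Real.exp ((3:ℕ) * (1/3 : ℝ)) = Real.exp (1/3 : ℝ)^(3:ℕ) := Real.exp_nat_mul _ 3
    have h2 : ((3:ℕ) : ℝ) * (1/3 : ℝ) = 1 := by norm_num
    have h3 : Real.exp (1/3:ℝ)^(3:ℕ) < 2.7182818286 := by
      rw [← h1, h2]; exact Real.exp_one_lt_d9
    by_contra hcon
    push_neg at hcon
    have h4 : (2:ℝ)^(3:ℕ) ≤ Real.exp (1/3:ℝ)^(3:ℕ) :=
      pow_le_pow_left₀ (by norm_num) hcon.le 3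
    norm_num at h4
    linarith
  have hsqrt : Real.sqrt Real.pi ≤ Real.pi := by
    nlinarith [Real.sq_sqrt hpi.le, Real.sqrt_nonneg Real.pi, Real.pi_gt_three]
  have key : Real.exp (1/3:ℝ) * Real.sqrt Real.pi ≤ 2*Real.pi :=
    mul_le_mul e13 hsqrt (Real.sqrt_nonneg _) (by norm_num)
  have hsplit : Real.exp (1/3 - x) = Real.exp (1/3:ℝ) * Real.exp (-x) := by
    rw [← Real.exp_add]; ring_nf
  rw [hsplit] at hre
  calc 1/(2*Real.pi) * |r| ≤ 1/(2*Real.pi) * (Real.exp (1/3:ℝ) * Real.exp (-x) * Real.sqrt Real.pi) := by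
        apply mul_le_mul_of_nonneg_left hre (by positivity)
    _ ≤ Real.exp (-x) := by
        rw [one_div, inv_mul_le_iff₀ h2pi]
        nlinarith [mul_le_mul_of_nonneg_right key (Real.exp_pos (-x)).le]


lemma lint_exp (s : ℝ) {c : ℝ} (hc : 0 < c) :
    ∫⁻ x in Set.Ioi s, ENNReal.ofReal (Real.exp (-(c*x)))
      = ENNReal.ofReal (Real.exp (-(c*s))/c) := by
  have hint : IntegrableOn (fun x : ℝ => Real.exp (-(c*x))) (Set.Ioi s) := by
    have := exp_neg_integrableOn_Ioi s hc
    simpa [neg_mul] using this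
  rw [← ofReal_integral_eq_lintegral_ofReal hint
    (Filter.Eventually.of_forall fun x => Real.exp_nonneg _)]
  congr 1
  have h1 : (∫ x in Set.Ioi s, Real.exp (-(c*x)))
      = c⁻¹ • ∫ x in Set.Ioi (c*s), Real.exp (-x) := by
    rw [← MeasureTheory.integral_comp_mul_left_Ioi (fun u => Real.exp (-u)) s hc]
  rw [h1, integral_exp_neg_Ioi]
  simp [smul_eq_mul, div_eq_inv_mul]

lemma lint_prod_exp (s : ℝ) {a b : ℝ} (ha : 0 < a) (hb : 0 < b) :
    (∫⁻ x in Set.Ioi s, ∫⁻ y in Set.Ioi s,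
        ENNReal.ofReal (Real.exp (-(a*x)) * Real.exp (-(b*y))))
      = ENNReal.ofReal ((Real.exp (-(a*s))/a) * (Real.exp (-(b*s))/b)) := by
  have hinner : ∀ x : ℝ, (∫⁻ y in Set.Ioi s,
      ENNReal.ofReal (Real.exp (-(a*x)) * Real.exp (-(b*y))))
      = ENNReal.ofReal (Real.exp (-(a*x))) * ENNReal.ofReal (Real.exp (-(b*s))/b) := by
    intro x
    simp_rw [ENNReal.ofReal_mul (Real.exp_nonneg _)]
    rw [lintegral_const_mul' _ _ ENNReal.ofReal_ne_top, lint_exp s hb]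
  simp_rw [hinner]
  rw [lintegral_mul_const' _ _ ENNReal.ofReal_ne_top, lint_exp s ha,
    ← ENNReal.ofReal_mul (by positivity)]

lemma Ai_sq_le (x y : ℝ) : Ai (x+y)^2 ≤ Real.exp (-(2*x)) * Real.exp (-(2*y)) := by
  have h := abs_Ai_le (x+y)
  have h2 : Ai (x+y)^2 ≤ Real.exp (-(x+y))^2 := by
    rw [← _root_.sq_abs]
    exact pow_le_pow_left₀ (abs_nonneg _) h 2
  refine h2.trans (le_of_eq ?_)
  rw [sq, ← Real.exp_add, ← Real.exp_add]
  congr 1; ring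

lemma Ai_sq_le' (x y : ℝ) :
    Real.exp y * Ai (x+y)^2 ≤ Real.exp (-(2*x)) * Real.exp (-(1*y)) := by
  calc Real.exp y * Ai (x+y)^2
      ≤ Real.exp y * (Real.exp (-(2*x)) * Real.exp (-(2*y))) :=
        mul_le_mul_of_nonneg_left (Ai_sq_le x y) (Real.exp_nonneg _)
    _ = Real.exp (-(2*x)) * Real.exp (-(1*y)) := by
        rw [← Real.exp_add, ← Real.exp_add, ← Real.exp_add]
        congr 1; ring

lemma prod_bound (s : ℝ) {a b : ℝ} (ha : 0 < a) (hb : 0 < b)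
    (K : ℝ → ℝ → ℝ)
    (hK : ∀ x y, s < x → s < y → K x y ^ 2 ≤ Real.exp (-(a*x)) * Real.exp (-(b*y)))
    (hK0 : ∀ x y, ¬(s < x ∧ s < y) → K x y = 0) :
    (∫⁻ p : ℝ × ℝ, ENNReal.ofReal (K p.1 p.2 ^ 2))
      ≤ ENNReal.ofReal ((Real.exp (-(a*s))/a) * (Real.exp (-(b*s))/b)) := by
  have hmeas : Measurable (fun z : ℝ × ℝ =>
      ENNReal.ofReal (Real.exp (-(a*z.1)) * Real.exp (-(b*z.2)))) := by
    apply ENNReal.measurable_ofReal.comp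
    fun_prop
  calc (∫⁻ p : ℝ × ℝ, ENNReal.ofReal (K p.1 p.2 ^ 2))
      ≤ ∫⁻ p : ℝ × ℝ, (Set.Ioi s ×ˢ Set.Ioi s).indicator
          (fun p : ℝ × ℝ => ENNReal.ofReal (Real.exp (-(a*p.1)) * Real.exp (-(b*p.2)))) p := by
        refine lintegral_mono fun p => ?_
        rw [Set.indicator_apply]
        simp only [Set.mem_prod, Set.mem_Ioi]
        by_cases hp : s < p.1 ∧ s < p.2
        · rw [if_pos hp]
          exact ENNReal.ofReal_le_ofReal (hK p.1 p.2 hp.1 hp.2)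
        · rw [if_neg hp, hK0 p.1 p.2 hp]
          simp
    _ = ∫⁻ p : ℝ × ℝ in Set.Ioi s ×ˢ Set.Ioi s,
          ENNReal.ofReal (Real.exp (-(a*p.1)) * Real.exp (-(b*p.2))) :=
        lintegral_indicator (measurableSet_Ioi.prod measurableSet_Ioi) _
    _ = ∫⁻ x in Set.Ioi s, ∫⁻ y in Set.Ioi s,
          ENNReal.ofReal (Real.exp (-(a*x)) * Real.exp (-(b*y))) := by
        rw [MeasureTheory.Measure.volume_eq_prod, ← Measure.prod_restrict]
        exact lintegral_prod _ hmeas.aemeasurable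
    _ = ENNReal.ofReal ((Real.exp (-(a*s))/a) * (Real.exp (-(b*s))/b)) :=
        lint_prod_exp s ha hb

end AiryAux

/-- Lemma 3.8: Airy kernel integral bounds
`∫_s^∞∫_s^∞ Ai(x+y)² ≤ e^{-4s}/4` and `∫_s^∞∫_s^∞ e^y Ai(x+y)² ≤ e^{-3s}/2`; in
particular the Hilbert–Schmidt norms of `K(x,y) = 1_{x>s}1_{y>s}Ai(x+y)` and of
`K̄(x,y) = 1_{x>s}1_{y>s}Ai(x+y)e^{y/2}` are at most `e^{-2s}/2` and `e^{-s}`. -/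
theorem airy_kernel_HS_bounds (s : ℝ) (hs : 0 ≤ s) :
    (∫⁻ x in Set.Ioi s, ∫⁻ y in Set.Ioi s, ENNReal.ofReal (Ai (x + y) ^ 2)) ≤
      ENNReal.ofReal (1 / 4 * Real.exp (-4 * s)) ∧
    (∫⁻ x in Set.Ioi s, ∫⁻ y in Set.Ioi s,
        ENNReal.ofReal (Real.exp y * Ai (x + y) ^ 2)) ≤
      ENNReal.ofReal (1 / 2 * Real.exp (-3 * s)) ∧
    HSnorm (fun x y => if s < x ∧ s < y then Ai (x + y) else 0) ≤
      1 / 2 * Real.exp (-2 * s) ∧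
    HSnorm (fun x y => if s < x ∧ s < y then Ai (x + y) * Real.exp (y / 2) else 0) ≤
      Real.exp (-s) := by
  have hv1 : ((Real.exp (-(2*s))/2) * (Real.exp (-(2*s))/2) : ℝ)
      = 1 / 4 * Real.exp (-4 * s) := by
    rw [div_mul_div_comm, ← Real.exp_add, show (-(2*s) + -(2*s) : ℝ) = -4 * s by ring]
    ring
  have hv2 : ((Real.exp (-(2*s))/2) * (Real.exp (-(1*s))/1) : ℝ)
      = 1 / 2 * Real.exp (-3 * s) := by
    rw [div_mul_div_comm, ← Real.exp_add, show (-(2*s) + -(1*s) : ℝ) = -3 * s by ring]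
    ring
  refine ⟨?_, ?_, ?_, ?_⟩
  · calc (∫⁻ x in Set.Ioi s, ∫⁻ y in Set.Ioi s, ENNReal.ofReal (Ai (x + y) ^ 2))
        ≤ ∫⁻ x in Set.Ioi s, ∫⁻ y in Set.Ioi s,
            ENNReal.ofReal (Real.exp (-(2*x)) * Real.exp (-(2*y))) :=
          lintegral_mono fun x => lintegral_mono fun y =>
            ENNReal.ofReal_le_ofReal (Ai_sq_le x y)
      _ = ENNReal.ofReal ((Real.exp (-(2*s))/2) * (Real.exp (-(2*s))/2)) :=
          lint_prod_exp s two_pos two_pos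
      _ = ENNReal.ofReal (1 / 4 * Real.exp (-4 * s)) := by rw [hv1]
  · calc (∫⁻ x in Set.Ioi s, ∫⁻ y in Set.Ioi s, ENNReal.ofReal (Real.exp y * Ai (x + y) ^ 2))
        ≤ ∫⁻ x in Set.Ioi s, ∫⁻ y in Set.Ioi s,
            ENNReal.ofReal (Real.exp (-(2*x)) * Real.exp (-(1*y))) :=
          lintegral_mono fun x => lintegral_mono fun y =>
            ENNReal.ofReal_le_ofReal (Ai_sq_le' x y)
      _ = ENNReal.ofReal ((Real.exp (-(2*s))/2) * (Real.exp (-(1*s))/1)) :=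
          lint_prod_exp s two_pos one_pos
      _ = ENNReal.ofReal (1 / 2 * Real.exp (-3 * s)) := by rw [hv2]
  · have hle := prod_bound s two_pos two_pos
      (fun x y => if s < x ∧ s < y then Ai (x + y) else 0)
      (fun x y hx hy => by rw [if_pos ⟨hx, hy⟩]; exact Ai_sq_le x y)
      (fun x y h => if_neg h)
    rw [hv1] at hle
    unfold HSnorm
    have ht : (∫⁻ p : ℝ × ℝ, ENNReal.ofReal
        ((if s < p.1 ∧ s < p.2 then Ai (p.1 + p.2) else 0) ^ 2)).toReal
        ≤ 1 / 4 * Real.exp (-4 * s) :=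
      ENNReal.toReal_le_of_le_ofReal (by positivity) hle
    calc Real.sqrt _ ≤ Real.sqrt (1 / 4 * Real.exp (-4 * s)) := Real.sqrt_le_sqrt ht
      _ = 1 / 2 * Real.exp (-2 * s) := by
          rw [show (1 / 4 * Real.exp (-4 * s) : ℝ) = (1 / 2 * Real.exp (-2 * s))^2 by
            rw [mul_pow, sq (Real.exp (-2*s)), ← Real.exp_add,
              show (-2*s + -2*s : ℝ) = -4*s by ring]; ring]
          exact Real.sqrt_sq (by positivity)
  · have hle := prod_bound s two_pos one_pos
      (fun x y => if s < x ∧ s < y then Ai (x + y) * Real.exp (y / 2) else 0)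
      (fun x y hx hy => by
        rw [if_pos ⟨hx, hy⟩, mul_pow, sq (Real.exp (y/2)), ← Real.exp_add,
          show (y/2 + y/2 : ℝ) = y by ring]
        calc Ai (x + y)^2 * Real.exp y = Real.exp y * Ai (x + y)^2 := by ring
          _ ≤ Real.exp (-(2*x)) * Real.exp (-(1*y)) := Ai_sq_le' x y)
      (fun x y h => if_neg h)
    rw [hv2] at hle
    unfold HSnorm
    have ht : (∫⁻ p : ℝ × ℝ, ENNReal.ofReal
        ((if s < p.1 ∧ s < p.2 then Ai (p.1 + p.2) * Real.exp (p.2 / 2) else 0) ^ 2)).toReal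
        ≤ 1 / 2 * Real.exp (-3 * s) :=
      ENNReal.toReal_le_of_le_ofReal (by positivity) hle
    calc Real.sqrt _ ≤ Real.sqrt (1 / 2 * Real.exp (-3 * s)) := Real.sqrt_le_sqrt ht
      _ ≤ Real.sqrt (Real.exp (-2 * s)) := by
          apply Real.sqrt_le_sqrt
          have h1 : Real.exp (-3 * s) = Real.exp (-s) * Real.exp (-2 * s) := by
            rw [← Real.exp_add]; congr 1; ring
          have h2 : Real.exp (-s) ≤ 1 := Real.exp_le_one_iff.2 (by linarith)
          nlinarith [Real.exp_pos (-2 * s)]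
      _ = Real.exp (-s) := by
          rw [show (-2 * s : ℝ) = -s + -s by ring, Real.exp_add, ← sq]
          exact Real.sqrt_sq (Real.exp_nonneg _)
end

section
/- For every x ≥ 0 and every u > 0, the Airy function satisfies |Ai(x + u²)| ≤ u^{-1/2}·e^{-2u³/3 − xu}. -/
open MeasureTheory Real Filter

section AiryAux
open Complex Topology
noncomputable def airyF (y : ℝ) (z : ℂ) : ℂ := Complex.exp (Complex.I * (z ^ 3 / 3 + y * z))

lemma airyF_diff (y : ℝ) : Differentiable ℂ (airyF y) := by
  unfold airyF; fun_prop

lemma airyF_cont (y : ℝ) : Continuous (airyF y) := (airyF_diff y).continuous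

-- algebra on the top edge
lemma airyF_top (x u s : ℝ) :
    airyF (x + u ^ 2) ((s : ℂ) + u * I) =
      Complex.exp (((-(2 * u ^ 3 / 3 + x * u) - u * s ^ 2 : ℝ) : ℂ)
        + ((s ^ 3 / 3 + x * s : ℝ) : ℂ) * I) := by
  unfold airyF
  congr 1
  apply Complex.ext <;>
    simp [Complex.ext_iff, pow_succ, Complex.add_re, Complex.add_im, Complex.mul_re,
      Complex.mul_im, Complex.div_re, Complex.div_im, Complex.normSq] <;> ring

-- left edge is real
lemma airyF_left (x u v : ℝ) :
    airyF (x + u ^ 2) ((v : ℝ) * I) = ((Real.exp (v ^ 3 / 3 - (x + u ^ 2) * v) : ℝ) : ℂ) := by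
  unfold airyF
  rw [Complex.ofReal_exp]
  congr 1
  apply Complex.ext <;>
    simp [Complex.ext_iff, pow_succ, Complex.add_re, Complex.add_im, Complex.mul_re,
      Complex.mul_im, Complex.div_re, Complex.div_im, Complex.normSq] <;> ring

-- norm on right edge
lemma airyF_right_norm (x u T v : ℝ) :
    ‖airyF (x + u ^ 2) ((T : ℂ) + v * I)‖ =
      Real.exp (v ^ 3 / 3 - (x + u ^ 2) * v - T ^ 2 * v) := by
  unfold airyF
  rw [Complex.norm_exp]
  congr 1
  simp [pow_succ, Complex.add_re, Complex.add_im, Complex.mul_re, Complex.mul_im,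
    Complex.div_re, Complex.div_im, Complex.normSq]
  ring

lemma airyF_top_norm (x u s : ℝ) :
    ‖airyF (x + u ^ 2) ((s : ℂ) + u * I)‖ =
      Real.exp (-(2 * u ^ 3 / 3 + x * u) - u * s ^ 2) := by
  rw [airyF_top, Complex.norm_exp]
  congr 1
  simp only [Complex.add_re, Complex.mul_re, Complex.I_re, Complex.I_im, Complex.ofReal_re,
    Complex.ofReal_im]
  ring

lemma airyF_rect (x u T : ℝ) :
    (∫ t in (0:ℝ)..T, airyF (x + u ^ 2) t) =
      (∫ s in (0:ℝ)..T, airyF (x + u ^ 2) ((s : ℂ) + u * I))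
        + I • (∫ v in (0:ℝ)..u, airyF (x + u ^ 2) ((v : ℝ) * I))
        - I • (∫ v in (0:ℝ)..u, airyF (x + u ^ 2) ((T : ℂ) + v * I)) := by
  have h := Complex.integral_boundary_rect_eq_zero_of_differentiableOn
    (airyF (x + u ^ 2)) 0 (⟨T, u⟩ : ℂ) ((airyF_diff _).differentiableOn)
  simp only [Complex.zero_re, Complex.zero_im] at h
  have h0 : ∀ t : ℝ, (t : ℂ) + ((0:ℝ) : ℂ) * I = (t : ℂ) := by intro t; simp
  simp only [h0, Complex.ofReal_zero, zero_add, zero_mul, add_zero] at h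
  linear_combination h

lemma airyF_top_integrableOn (x u : ℝ) (hu : 0 < u) :
    IntegrableOn (fun s : ℝ => airyF (x + u ^ 2) ((s : ℂ) + u * I)) (Set.Ioi 0) := by
  apply Integrable.integrableOn
  apply Integrable.mono' ((integrable_exp_neg_mul_sq hu).const_mul (Real.exp (-(2 * u ^ 3 / 3 + x * u))))
  · exact ((airyF_cont (x + u ^ 2)).comp (by continuity)).aestronglyMeasurable
  · filter_upwards with s
    rw [airyF_top_norm, ← Real.exp_add]
    apply le_of_eq; congr 1; ring

lemma airyF_top_tendsto (x u : ℝ) (hu : 0 < u) :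
    Tendsto (fun T : ℝ => ∫ s in (0:ℝ)..T, airyF (x + u ^ 2) ((s : ℂ) + u * I)) atTop
      (𝓝 (∫ s in Set.Ioi (0:ℝ), airyF (x + u ^ 2) ((s : ℂ) + u * I))) :=
  intervalIntegral_tendsto_integral_Ioi 0 (airyF_top_integrableOn x u hu) tendsto_id

lemma airyF_right_tendsto (x u : ℝ) (hx : 0 ≤ x) (hu : 0 < u) :
    Tendsto (fun T : ℝ => ∫ v in (0:ℝ)..u, airyF (x + u ^ 2) ((T : ℂ) + v * I)) atTop
      (𝓝 0) := by
  have h0 : (0 : ℂ) = ∫ v in (0:ℝ)..u, (0 : ℂ) := by simp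
  rw [h0]
  apply intervalIntegral.tendsto_integral_filter_of_dominated_convergence
    (fun _ => Real.exp (u ^ 3 / 3))
  · filter_upwards with T
    exact (((airyF_cont (x + u ^ 2)).comp (by continuity)).aestronglyMeasurable).restrict
  · filter_upwards [eventually_ge_atTop (0:ℝ)] with T hT
    filter_upwards with v hv
    rw [Set.uIoc_of_le hu.le] at hv
    rw [airyF_right_norm, Real.exp_le_exp]
    have h1 : v ^ 3 / 3 ≤ u ^ 3 / 3 := by
      have := pow_le_pow_left₀ hv.1.le hv.2 3
      linarith
    nlinarith [hv.1.le, hv.2, sq_nonneg T, mul_nonneg (add_nonneg hx (sq_nonneg u)) hv.1.le, mul_nonneg (sq_nonneg T) hv.1.le]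
  · exact intervalIntegrable_const
  · filter_upwards with v hv
    rw [Set.uIoc_of_le hu.le] at hv
    rw [tendsto_zero_iff_norm_tendsto_zero]
    simp only [airyF_right_norm]
    have heq : ∀ T : ℝ, Real.exp (v ^ 3 / 3 - (x + u ^ 2) * v - T ^ 2 * v)
        = Real.exp (v ^ 3 / 3 - (x + u ^ 2) * v) * Real.exp (-v * T ^ 2) := by
      intro T; rw [← Real.exp_add]; congr 1; ring
    simp only [heq]
    rw [← mul_zero (Real.exp (v ^ 3 / 3 - (x + u ^ 2) * v))]
    apply Tendsto.const_mul
    apply Real.tendsto_exp_atBot.comp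
    exact Tendsto.const_mul_atTop_of_neg (neg_neg_iff_pos.mpr hv.1)
      (tendsto_pow_atTop (two_ne_zero))

lemma airyF_integral_tendsto (x u : ℝ) (hx : 0 ≤ x) (hu : 0 < u) :
    Tendsto (fun T : ℝ => ∫ t in (0:ℝ)..T, airyF (x + u ^ 2) t) atTop
      (𝓝 ((∫ s in Set.Ioi (0:ℝ), airyF (x + u ^ 2) ((s : ℂ) + u * I))
        + I • (∫ v in (0:ℝ)..u, airyF (x + u ^ 2) ((v : ℝ) * I)))) := by
  have hc : Tendsto (fun _ : ℝ => I • (∫ v in (0:ℝ)..u, airyF (x + u ^ 2) ((v : ℝ) * I)))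
      atTop (𝓝 (I • (∫ v in (0:ℝ)..u, airyF (x + u ^ 2) ((v : ℝ) * I)))) := tendsto_const_nhds
  have h := ((airyF_top_tendsto x u hu).add hc).sub
    ((airyF_right_tendsto x u hx hu).const_smul I)
  simp only [smul_zero, sub_zero] at h
  exact h.congr (fun T => (airyF_rect x u T).symm)

lemma airyF_re (y t : ℝ) : (airyF y (t : ℂ)).re = Real.cos (t ^ 3 / 3 + y * t) := by
  unfold airyF
  have h : Complex.I * ((t : ℂ) ^ 3 / 3 + (y : ℂ) * t) = ((t ^ 3 / 3 + y * t : ℝ) : ℂ) * I := by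
    push_cast; ring
  rw [h, Complex.exp_ofReal_mul_I_re]

lemma cos_integral_eq (y T : ℝ) :
    (∫ t in (0:ℝ)..T, Real.cos (t ^ 3 / 3 + y * t)) = (∫ t in (0:ℝ)..T, airyF y t).re := by
  have hint : IntervalIntegrable (fun t : ℝ => airyF y t) volume 0 T :=
    ((airyF_cont y).comp Complex.continuous_ofReal).intervalIntegrable 0 T
  have := Complex.reCLM.intervalIntegral_comp_comm hint
  simp only [Complex.reCLM_apply] at this
  rw [← this]
  apply intervalIntegral.integral_congr
  intro t _
  exact (airyF_re y t).symm

end AiryAux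

open Complex Topology in
/-- display `(A.5)` in Appendix A.1: for all `x ≥ 0` and `u > 0`,
`|Ai(x + u²)| ≤ u^{-1/2} e^{-2u³/3 − xu}`. -/
theorem airy_shifted_bound (x u : ℝ) (hx : 0 ≤ x) (hu : 0 < u) :
    |Ai (x + u ^ 2)| ≤ u ^ (-(1 : ℝ) / 2) * Real.exp (-2 * u ^ 3 / 3 - x * u) := by
  set G := ∫ s in Set.Ioi (0:ℝ), airyF (x + u ^ 2) ((s : ℂ) + u * I) with hGdef
  set S := ∫ v in (0:ℝ)..u, airyF (x + u ^ 2) ((v : ℝ) * I) with hSdef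
  -- identify Ai
  have hlim : Tendsto (fun T : ℝ =>
      (1 / Real.pi) * ∫ t in (0:ℝ)..T, Real.cos (t ^ 3 / 3 + (x + u ^ 2) * t)) atTop
      (𝓝 ((1 / Real.pi) * (G + I • S).re)) := by
    apply Tendsto.const_mul
    have h := (Complex.continuous_re.tendsto _).comp (airyF_integral_tendsto x u hx hu)
    exact h.congr (fun T => (cos_integral_eq (x + u ^ 2) T).symm)
  have hAi : Ai (x + u ^ 2) = (1 / Real.pi) * (G + I • S).re := hlim.limUnder_eq
  -- S is real, so its I-multiple has zero real part
  have hS : (I • S).re = 0 := by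
    have : S = ((∫ v in (0:ℝ)..u, Real.exp (v ^ 3 / 3 - (x + u ^ 2) * v) : ℝ) : ℂ) := by
      rw [hSdef, ← intervalIntegral.integral_ofReal]
      exact intervalIntegral.integral_congr fun v _ => airyF_left x u v
    rw [this]
    simp [Complex.smul_re]
  have hre : (G + I • S).re = G.re := by rw [Complex.add_re, hS, add_zero]
  -- bound ‖G‖
  have hGnorm : ‖G‖ ≤ Real.exp (-2 * u ^ 3 / 3 - x * u) * (Real.sqrt (π / u) / 2) := by
    calc ‖G‖ ≤ ∫ s in Set.Ioi (0:ℝ), ‖airyF (x + u ^ 2) ((s : ℂ) + u * I)‖ :=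
          norm_integral_le_integral_norm _
    _ = ∫ s in Set.Ioi (0:ℝ), Real.exp (-2 * u ^ 3 / 3 - x * u) * Real.exp (-u * s ^ 2) := by
        apply integral_congr_ae
        filter_upwards with s
        rw [airyF_top_norm, ← Real.exp_add]
        congr 1; ring
    _ = Real.exp (-2 * u ^ 3 / 3 - x * u) * ∫ s in Set.Ioi (0:ℝ), Real.exp (-u * s ^ 2) :=
        integral_const_mul _ _
    _ = _ := by rw [integral_gaussian_Ioi]
  -- final arithmetic
  have hπ : (0:ℝ) < π := Real.pi_pos
  have hsu : (0:ℝ) < Real.sqrt u := Real.sqrt_pos.mpr hu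
  have habs : |Ai (x + u ^ 2)| ≤ (1 / π) * (Real.exp (-2 * u ^ 3 / 3 - x * u) * (Real.sqrt (π / u) / 2)) := by
    rw [hAi, hre, abs_mul, abs_of_pos (by positivity : (0:ℝ) < 1 / π)]
    apply mul_le_mul_of_nonneg_left _ (by positivity)
    exact (Complex.abs_re_le_norm G).trans hGnorm
  refine habs.trans ?_
  set E := Real.exp (-2 * u ^ 3 / 3 - x * u) with hE
  have hEpos : 0 < E := Real.exp_pos _
  have hrw : u ^ (-(1:ℝ) / 2) = (Real.sqrt u)⁻¹ := by
    rw [neg_div, Real.rpow_neg hu.le, Real.sqrt_eq_rpow]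
  rw [hrw, Real.sqrt_div hπ.le u]
  have h2 : Real.sqrt π ≤ 2 * π := by
    nlinarith [Real.sq_sqrt hπ.le, sq_nonneg (Real.sqrt π - 1), Real.pi_gt_three]
  have lhs_eq : 1 / π * (E * (Real.sqrt π / Real.sqrt u / 2))
      = (E * Real.sqrt π) / (2 * π * Real.sqrt u) := by field_simp
  have rhs_eq : (Real.sqrt u)⁻¹ * E = (E * (2 * π)) / (2 * π * Real.sqrt u) := by
    field_simp
  rw [lhs_eq, rhs_eq]
  gcongr
end
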